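/- Let c, μ, η, γ > 0 with c + μ ≤ 1. There exists ζ > 0 such that for sufficiently large n the following holds. If G is an n-vertex graph with δ(G) ≥ (c+μ)n such that every vertex v has a collection L(v) of at least ηn pairwise vertex-disjoint absorbers, then there is a set A ⊆ V(G) with 2rζn ≤ |A| ≤ γn such that every v ∈ V(G) satisfies |N(v) ∩ A| ≥ (c + μ/2)|A| and v has at least ζn pairwise vertex-disjoint absorbers inside A. -/

import Mathlib

/-- `p` is (an embedding of) an `r`-path of order `ℓ` in `G`: the vertices are
distinct and any two at distance at most `r` along the path are adjacent. -/
def IsRPathMap {V : Type*} (G : SimpleGraph V) (r ℓ : ℕ) (p : Fin ℓ → V) : Prop :=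
  Function.Injective p ∧
  ∀ i j : Fin ℓ, i.val < j.val → j.val ≤ i.val + r → G.Adj (p i) (p j)

/-- Insert the vertex `v` into the middle of the `2r`-vertex sequence `p`. -/
def insertMid {V : Type*} (r : ℕ) (v : V) (p : Fin (2 * r) → V) :
    Fin (2 * r + 1) → V := fun i =>
  if h : i.val < r then p ⟨i.val, by omega⟩
  else if h2 : i.val = r then v
  else p ⟨i.val - 1, by have := i.isLt; omega⟩

/-- `p` is an absorber for the vertex `v`: an `r`-path of order `2r` such that its
vertices together with `v` (inserted in the middle) form an `r`-path of order `2r + 1`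
with the same ends. -/
def IsAbsorber {V : Type*} (r : ℕ) (G : SimpleGraph V) (v : V)
    (p : Fin (2 * r) → V) : Prop :=
  IsRPathMap G r (2 * r) p ∧ v ∉ Set.range p ∧
  IsRPathMap G r (2 * r + 1) (insertMid r v p)


namespace Stmt15Aux

open Finset Real

set_option linter.unusedSectionVars false
set_option maxHeartbeats 1000000

variable {V ι : Type*} [Fintype V] [DecidableEq V] [Fintype ι] [DecidableEq ι]

/-- weight of a configuration -/
def wt (p : ℝ) (ω : V → Bool) : ℝ := ∏ v, (if ω v then p else 1 - p)

lemma wt_nonneg {p : ℝ} (hp0 : 0 ≤ p) (hp1 : p ≤ 1) (ω : V → Bool) : 0 ≤ wt p ω :=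
  Finset.prod_nonneg fun v _ => by split <;> linarith

lemma wt_sum (p : ℝ) : ∑ ω : V → Bool, wt (V := V) p ω = 1 := by
  classical
  unfold wt
  rw [← Fintype.prod_sum (fun (_ : V) (b : Bool) => if b then p else 1 - p)]
  simp

lemma eval_block {S : Type*} [Fintype S] [DecidableEq S] (p a b : ℝ) :
    ∑ σ : S → Bool, (∏ v, if σ v then p else 1 - p) *
      (if (∀ v, σ v = true) then a else b)
    = p ^ Fintype.card S * a + (1 - p ^ Fintype.card S) * b := by
  classical
  have hall : ∑ σ : S → Bool, (∏ v, if σ v then p else 1 - p) = 1 := by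
    rw [← Fintype.prod_sum (fun (_ : S) (b : Bool) => if b then p else 1 - p)]
    simp
  set σ₀ : S → Bool := fun _ => true with hσ₀
  have h₀ : (∏ v, if σ₀ v then p else 1 - p) = p ^ Fintype.card S := by
    simp [σ₀]
  have hsplit := Finset.sum_erase_add Finset.univ
    (fun σ : S → Bool => (∏ v, if σ v then p else 1 - p) *
      (if (∀ v, σ v = true) then a else b)) (Finset.mem_univ σ₀)
  have hsplit' := Finset.sum_erase_add Finset.univ
    (fun σ : S → Bool => ∏ v, if σ v then p else 1 - p) (Finset.mem_univ σ₀)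
  rw [hall] at hsplit'
  have hne : ∀ σ ∈ Finset.univ.erase σ₀, ¬ (∀ v : S, σ v = true) := by
    intro σ hσ hσall
    exact (Finset.ne_of_mem_erase hσ) (funext fun v => by simp [hσall v, σ₀])
  calc ∑ σ : S → Bool, (∏ v, if σ v then p else 1 - p) *
        (if (∀ v, σ v = true) then a else b)
      = (∑ σ ∈ Finset.univ.erase σ₀, (∏ v, if σ v then p else 1 - p) *
          (if (∀ v, σ v = true) then a else b)) +
        (∏ v, if σ₀ v then p else 1 - p) * (if (∀ v : S, σ₀ v = true) then a else b) :=
        hsplit.symm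
    _ = (∑ σ ∈ Finset.univ.erase σ₀, (∏ v, if σ v then p else 1 - p)) * b
        + p ^ Fintype.card S * a := by
        rw [Finset.sum_mul]
        congr 1
        · exact Finset.sum_congr rfl fun σ hσ => by rw [if_neg (hne σ hσ)]
        · rw [h₀, if_pos (fun v => rfl)]
    _ = p ^ Fintype.card S * a + (1 - p ^ Fintype.card S) * b := by
        have : ∑ σ ∈ Finset.univ.erase σ₀, (∏ v, if σ v then p else 1 - p)
            = 1 - p ^ Fintype.card S := by rw [← h₀]; linarith
        rw [this]; ring

lemma main_identity (p : ℝ) (idx : V → ι) (fT fF : ι → ℝ) :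
    ∑ ω : V → Bool, wt p ω *
      ∏ j, (if (∀ v, idx v = j → ω v = true) then fT j else fF j)
    = ∏ j, (p ^ (Fintype.card {v // idx v = j}) * fT j
        + (1 - p ^ (Fintype.card {v // idx v = j})) * fF j) := by
  classical
  have key : ∀ ω : V → Bool,
      wt p ω * ∏ j, (if (∀ v, idx v = j → ω v = true) then fT j else fF j)
      = ∏ j, ((∏ v : {v // idx v = j}, if ω v.1 then p else 1 - p) *
          (if (∀ v : {v // idx v = j}, ω v.1 = true) then fT j else fF j)) := by
    intro ω
    rw [Finset.prod_mul_distrib]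
    congr 1
    · exact (Fintype.prod_fiberwise idx fun v => if ω v then p else 1 - p).symm
    · refine Finset.prod_congr rfl fun j _ => ?_
      congr 1
      simp only [eq_iff_iff]
      constructor
      · intro h v; exact h v.1 v.2
      · intro h v hv; exact h ⟨v, hv⟩
  simp only [key]
  have hbij : Function.Bijective
      (fun (ω : V → Bool) => fun (j : ι) (v : {v // idx v = j}) => ω v.1) := by
    constructor
    · intro ω ω' h
      funext v
      exact congrFun (congrFun h (idx v)) ⟨v, rfl⟩
    · intro x
      refine ⟨fun v => x (idx v) ⟨v, rfl⟩, ?_⟩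
      funext j v
      obtain ⟨v, rfl⟩ := v
      rfl
  rw [Fintype.sum_bijective _ hbij _
    (fun x : ∀ j, {v // idx v = j} → Bool =>
      ∏ j, ((∏ v : {v // idx v = j}, if x j v then p else 1 - p) *
        (if (∀ v : {v // idx v = j}, x j v = true) then fT j else fF j)))
    (fun ω => rfl)]
  rw [← Fintype.prod_sum (fun (j : ι) (σ : {v // idx v = j} → Bool) =>
    (∏ v, if σ v then p else 1 - p) *
      (if (∀ v, σ v = true) then fT j else fF j))]
  exact Finset.prod_congr rfl fun j _ => eval_block p (fT j) (fF j)

/-- number of blocks (fibers of `idx` over `J`) that are fully `true`. -/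
def fullCount (idx : V → ι) (J : Finset ι) (ω : V → Bool) : ℕ :=
  (J.filter (fun j => ∀ v, idx v = j → ω v = true)).card

lemma mgf_bound (p : ℝ) (idx : V → ι) (J : Finset ι) (s : ℕ)
    (hs : ∀ j ∈ J, Fintype.card {v // idx v = j} = s) (u : ℝ) :
    ∑ ω : V → Bool, wt p ω * u ^ fullCount idx J ω
      = (p ^ s * u + (1 - p ^ s)) ^ J.card := by
  classical
  have h1 : ∀ ω : V → Bool, u ^ fullCount idx J ω
      = ∏ j, (if (∀ v, idx v = j → ω v = true)
          then (if j ∈ J then u else 1) else (if j ∈ J then (1:ℝ) else 1)) := by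
    intro ω
    have h : ∀ j : ι, (if (∀ v, idx v = j → ω v = true)
          then (if j ∈ J then u else 1) else (if j ∈ J then (1:ℝ) else 1))
        = (if j ∈ J then (if (∀ v, idx v = j → ω v = true) then u else 1) else 1) := by
      intro j; by_cases h : j ∈ J <;> by_cases h2 : (∀ v, idx v = j → ω v = true) <;>
        simp [h, h2]
    rw [Finset.prod_congr rfl fun j _ => h j]
    rw [Finset.prod_ite_mem Finset.univ J, Finset.univ_inter, ← Finset.prod_filter,
      Finset.prod_const]
    rfl
  simp only [h1]
  rw [main_identity p idx (fun j => if j ∈ J then u else 1)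
    (fun j => if j ∈ J then (1:ℝ) else 1)]
  have h2 : ∀ j : ι, (p ^ (Fintype.card {v // idx v = j}) * (if j ∈ J then u else 1)
        + (1 - p ^ (Fintype.card {v // idx v = j})) * (if j ∈ J then (1:ℝ) else 1))
      = (if j ∈ J then (p ^ s * u + (1 - p ^ s)) else 1) := by
    intro j
    by_cases h : j ∈ J
    · simp [h, hs j h]
    · simp [h]
  rw [Finset.prod_congr rfl fun j _ => h2 j, Finset.prod_ite_mem Finset.univ J,
    Finset.univ_inter, Finset.prod_const]

lemma tail_le (p : ℝ) (hp0 : 0 ≤ p) (hp1 : p ≤ 1) (idx : V → ι) (J : Finset ι) (s : ℕ)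
    (hs : ∀ j ∈ J, Fintype.card {v // idx v = j} = s) (a t : ℝ) (ht : 0 ≤ t) :
    ∑ ω ∈ Finset.univ.filter (fun ω : V → Bool => (fullCount idx J ω : ℝ) ≤ a), wt p ω
      ≤ Real.exp (t * a) * (p ^ s * Real.exp (-t) + (1 - p ^ s)) ^ J.card := by
  classical
  have hwt : ∀ ω : V → Bool, 0 ≤ wt p ω :=
    fun ω => Finset.prod_nonneg fun v _ => by split <;> linarith
  have step1 : ∑ ω ∈ Finset.univ.filter (fun ω : V → Bool => (fullCount idx J ω : ℝ) ≤ a),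
        wt p ω
      ≤ ∑ ω : V → Bool, wt p ω * (Real.exp (t * a) * Real.exp (-t) ^ fullCount idx J ω) := by
    refine le_trans (Finset.sum_le_sum ?_) (Finset.sum_le_sum_of_subset_of_nonneg
      (Finset.filter_subset _ _) ?_)
    · intro ω hω
      rw [Finset.mem_filter] at hω
      have hX : (fullCount idx J ω : ℝ) ≤ a := hω.2
      have h : (1:ℝ) ≤ Real.exp (t * a) * Real.exp (-t) ^ fullCount idx J ω := by
        rw [← Real.exp_nat_mul, ← Real.exp_add]
        refine Real.one_le_exp ?_
        nlinarith [hX, ht]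
      nlinarith [hwt ω, h]
    · intro ω _ _
      exact mul_nonneg (hwt ω) (by positivity)
  calc ∑ ω ∈ Finset.univ.filter (fun ω : V → Bool => (fullCount idx J ω : ℝ) ≤ a), wt p ω
      ≤ ∑ ω : V → Bool, wt p ω * (Real.exp (t * a) * Real.exp (-t) ^ fullCount idx J ω) :=
        step1
    _ = Real.exp (t * a) * ∑ ω : V → Bool, wt p ω * Real.exp (-t) ^ fullCount idx J ω := by
        rw [Finset.mul_sum]; exact Finset.sum_congr rfl fun ω _ => by ring
    _ = Real.exp (t * a) * (p ^ s * Real.exp (-t) + (1 - p ^ s)) ^ J.card := by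
        rw [mgf_bound p idx J s hs (Real.exp (-t))]

lemma tail_ge (p : ℝ) (hp0 : 0 ≤ p) (hp1 : p ≤ 1) (idx : V → ι) (J : Finset ι) (s : ℕ)
    (hs : ∀ j ∈ J, Fintype.card {v // idx v = j} = s) (a t : ℝ) (ht : 0 ≤ t) :
    ∑ ω ∈ Finset.univ.filter (fun ω : V → Bool => a ≤ (fullCount idx J ω : ℝ)), wt p ω
      ≤ Real.exp (-(t * a)) * (p ^ s * Real.exp t + (1 - p ^ s)) ^ J.card := by
  classical
  have hwt : ∀ ω : V → Bool, 0 ≤ wt p ω :=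
    fun ω => Finset.prod_nonneg fun v _ => by split <;> linarith
  have step1 : ∑ ω ∈ Finset.univ.filter (fun ω : V → Bool => a ≤ (fullCount idx J ω : ℝ)),
        wt p ω
      ≤ ∑ ω : V → Bool, wt p ω * (Real.exp (-(t * a)) * Real.exp t ^ fullCount idx J ω) := by
    refine le_trans (Finset.sum_le_sum ?_) (Finset.sum_le_sum_of_subset_of_nonneg
      (Finset.filter_subset _ _) ?_)
    · intro ω hω
      rw [Finset.mem_filter] at hω
      have hX : a ≤ (fullCount idx J ω : ℝ) := hω.2
      have h : (1:ℝ) ≤ Real.exp (-(t * a)) * Real.exp t ^ fullCount idx J ω := by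
        rw [← Real.exp_nat_mul, ← Real.exp_add]
        refine Real.one_le_exp ?_
        nlinarith [hX, ht]
      nlinarith [hwt ω, h]
    · intro ω _ _
      exact mul_nonneg (hwt ω) (by positivity)
  calc ∑ ω ∈ Finset.univ.filter (fun ω : V → Bool => a ≤ (fullCount idx J ω : ℝ)), wt p ω
      ≤ ∑ ω : V → Bool, wt p ω * (Real.exp (-(t * a)) * Real.exp t ^ fullCount idx J ω) :=
        step1
    _ = Real.exp (-(t * a)) * ∑ ω : V → Bool, wt p ω * Real.exp t ^ fullCount idx J ω := by
        rw [Finset.mul_sum]; exact Finset.sum_congr rfl fun ω _ => by ring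
    _ = Real.exp (-(t * a)) * (p ^ s * Real.exp t + (1 - p ^ s)) ^ J.card := by
        rw [mgf_bound p idx J s hs (Real.exp t)]

lemma log_one_sub_bound {δ : ℝ} (hδ0 : 0 < δ) (hδ1 : δ < 1) :
    -Real.log (1 - δ) ≤ δ / (1 - δ) := by
  have h1 : (0:ℝ) < 1 - δ := by linarith
  have h2 : 1 + δ / (1 - δ) = 1 / (1 - δ) := by field_simp; ring
  have h3 : (1:ℝ) / (1 - δ) ≤ Real.exp (δ / (1 - δ)) := by
    rw [← h2]; linarith [Real.add_one_le_exp (δ / (1 - δ))]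
  have h4 : Real.log (1 / (1 - δ)) ≤ δ / (1 - δ) := by
    calc Real.log (1 / (1 - δ)) ≤ Real.log (Real.exp (δ / (1 - δ))) :=
          Real.log_le_log (by positivity) h3
      _ = δ / (1 - δ) := Real.log_exp _
  rw [Real.log_div one_ne_zero (ne_of_gt h1), Real.log_one] at h4
  linarith

lemma log_one_add_bound {δ : ℝ} (hδ0 : 0 < δ) : δ / (1 + δ) < Real.log (1 + δ) := by
  have h1 : (0:ℝ) < 1 + δ := by linarith
  have hpos : (0:ℝ) < δ / (1 + δ) := by positivity
  have key : (1:ℝ) / (1 + δ) < Real.exp (-(δ / (1 + δ))) := by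
    have h := Real.add_one_lt_exp (x := -(δ / (1 + δ)))
      (by intro hx; rw [neg_eq_zero] at hx; linarith)
    calc (1:ℝ) / (1 + δ) = -(δ / (1 + δ)) + 1 := by field_simp; ring
      _ < Real.exp (-(δ / (1 + δ))) := h
  have h5 : Real.log (1 / (1 + δ)) < -(δ / (1 + δ)) := by
    calc Real.log (1 / (1 + δ)) < Real.log (Real.exp (-(δ / (1 + δ)))) :=
          Real.log_lt_log (by positivity) key
      _ = -(δ / (1 + δ)) := Real.log_exp _
  rw [Real.log_div one_ne_zero (ne_of_gt h1), Real.log_one] at h5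
  linarith

lemma ql_lt_one {δ ρ : ℝ} (hδ0 : 0 < δ) (hρ0 : 0 < ρ) (hδρ : δ * ρ < 1) :
    Real.exp (δ * ρ) * (1 - δ * ρ) < 1 := by
  have h := Real.add_one_lt_exp (x := -(δ * ρ)) (by nlinarith)
  have h2 : 1 - δ * ρ < Real.exp (-(δ * ρ)) := by linarith
  have h3 := Real.exp_pos (δ * ρ)
  calc Real.exp (δ * ρ) * (1 - δ * ρ) < Real.exp (δ * ρ) * Real.exp (-(δ * ρ)) := by
        nlinarith
    _ = 1 := by rw [← Real.exp_add]; simp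

lemma qu_lt_one {δ ρ : ℝ} (hδ0 : 0 < δ) (hρ0 : 0 < ρ) :
    Real.exp (-(Real.log (1 + δ) * ((1 + δ) * ρ))) * (1 + δ * ρ) < 1 := by
  have h1 : (0:ℝ) < 1 + δ * ρ := by nlinarith
  have h2 : Real.log (1 + δ * ρ) ≤ δ * ρ := by
    have := Real.add_one_le_exp (δ * ρ)
    calc Real.log (1 + δ * ρ) ≤ Real.log (Real.exp (δ * ρ)) :=
          Real.log_le_log h1 (by linarith)
      _ = δ * ρ := Real.log_exp _
  have h3 : δ * ρ < Real.log (1 + δ) * ((1 + δ) * ρ) := by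
    have hb := log_one_add_bound hδ0
    have h4 : δ < Real.log (1 + δ) * (1 + δ) := by
      have h5 : (0:ℝ) < 1 + δ := by linarith
      calc δ = (δ / (1 + δ)) * (1 + δ) := by field_simp
        _ < Real.log (1 + δ) * (1 + δ) := mul_lt_mul_of_pos_right hb h5
    nlinarith
  have h5 : 1 + δ * ρ < Real.exp (Real.log (1 + δ) * ((1 + δ) * ρ)) := by
    calc 1 + δ * ρ = Real.exp (Real.log (1 + δ * ρ)) := (Real.exp_log h1).symm
      _ < Real.exp (Real.log (1 + δ) * ((1 + δ) * ρ)) := Real.exp_lt_exp.mpr (by linarith)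
  have h6 := Real.exp_pos (-(Real.log (1 + δ) * ((1 + δ) * ρ)))
  calc Real.exp (-(Real.log (1 + δ) * ((1 + δ) * ρ))) * (1 + δ * ρ)
      < Real.exp (-(Real.log (1 + δ) * ((1 + δ) * ρ))) *
          Real.exp (Real.log (1 + δ) * ((1 + δ) * ρ)) := by nlinarith
    _ = 1 := by rw [← Real.exp_add]; simp

lemma tail_le_final (p δ : ℝ) (hp0 : 0 < p) (hp1 : p ≤ 1) (hδ0 : 0 < δ) (hδ1 : δ < 1)
    (idx : V → ι) (J : Finset ι) (s : ℕ)
    (hs : ∀ j ∈ J, Fintype.card {v // idx v = j} = s) :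
    ∑ ω ∈ Finset.univ.filter
        (fun ω : V → Bool => (fullCount idx J ω : ℝ) ≤ (1 - δ) * p ^ s * J.card), wt p ω
      ≤ (Real.exp (δ * p ^ s) * (1 - δ * p ^ s)) ^ J.card := by
  set ρ : ℝ := p ^ s with hρ
  have hρ0 : 0 < ρ := pow_pos hp0 s
  have hρ1 : ρ ≤ 1 := pow_le_one₀ hp0.le hp1
  have h1δ : (0:ℝ) < 1 - δ := by linarith
  set t : ℝ := -Real.log (1 - δ) with htdef
  have ht : 0 ≤ t := by
    have := Real.log_nonpos (by linarith) (by linarith : (1:ℝ) - δ ≤ 1)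
    simp [htdef]; linarith
  have hexp : Real.exp (-t) = 1 - δ := by
    rw [htdef, neg_neg, Real.exp_log h1δ]
  have hT := tail_le p hp0.le hp1 idx J s hs ((1 - δ) * ρ * J.card) t ht
  refine le_trans hT ?_
  have heq : Real.exp (t * ((1 - δ) * ρ * J.card)) * (ρ * Real.exp (-t) + (1 - ρ)) ^ J.card
      = (Real.exp (t * ((1 - δ) * ρ)) * (1 - δ * ρ)) ^ J.card := by
    rw [mul_pow, ← Real.exp_nat_mul]
    rw [hexp]
    ring_nf
  rw [heq]
  have hbase : Real.exp (t * ((1 - δ) * ρ)) * (1 - δ * ρ) ≤ Real.exp (δ * ρ) * (1 - δ * ρ) := by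
    have h2 : t * (1 - δ) ≤ δ := by
      have hlog := log_one_sub_bound hδ0 hδ1
      rw [← htdef] at hlog
      calc t * (1 - δ) ≤ (δ / (1 - δ)) * (1 - δ) := by nlinarith
        _ = δ := by field_simp
    have h3 : t * ((1 - δ) * ρ) ≤ δ * ρ := by nlinarith
    have h4 : (0:ℝ) ≤ 1 - δ * ρ := by nlinarith
    exact mul_le_mul_of_nonneg_right (Real.exp_le_exp.mpr h3) h4
  have h4 : (0:ℝ) ≤ Real.exp (t * ((1 - δ) * ρ)) * (1 - δ * ρ) := by
    have : (0:ℝ) ≤ 1 - δ * ρ := by nlinarith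
    positivity
  exact pow_le_pow_left₀ h4 hbase J.card

lemma tail_ge_final (p δ : ℝ) (hp0 : 0 < p) (hp1 : p ≤ 1) (hδ0 : 0 < δ)
    (idx : V → ι) (J : Finset ι) (s : ℕ)
    (hs : ∀ j ∈ J, Fintype.card {v // idx v = j} = s) :
    ∑ ω ∈ Finset.univ.filter
        (fun ω : V → Bool => (1 + δ) * p ^ s * J.card ≤ (fullCount idx J ω : ℝ)), wt p ω
      ≤ (Real.exp (-(Real.log (1 + δ) * ((1 + δ) * p ^ s))) * (1 + δ * p ^ s)) ^ J.card := by
  set ρ : ℝ := p ^ s with hρ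
  have hρ0 : 0 < ρ := pow_pos hp0 s
  have h1δ : (0:ℝ) < 1 + δ := by linarith
  set t : ℝ := Real.log (1 + δ) with htdef
  have ht : 0 ≤ t := Real.log_nonneg (by linarith)
  have hexp : Real.exp t = 1 + δ := Real.exp_log h1δ
  have hT := tail_ge p hp0.le hp1 idx J s hs ((1 + δ) * ρ * J.card) t ht
  refine le_trans hT (le_of_eq ?_)
  rw [mul_pow, ← Real.exp_nat_mul, hexp]
  ring_nf
  rw [← hρ]

lemma exists_good {Ω κ : Type*} [Fintype Ω] [Fintype κ] (W : Ω → ℝ)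
    (hW : ∀ ω, 0 ≤ W ω) (hsum : ∑ ω, W ω = 1)
    (Bad : κ → Ω → Prop) [∀ k ω, Decidable (Bad k ω)]
    (hbad : ∑ k, ∑ ω ∈ Finset.univ.filter (Bad k), W ω < 1) :
    ∃ ω : Ω, ∀ k, ¬ Bad k ω := by
  by_contra h
  push_neg at h
  have key : (1:ℝ) ≤ ∑ k, ∑ ω ∈ Finset.univ.filter (Bad k), W ω := by
    rw [← hsum]
    have h1 : ∀ ω : Ω, W ω ≤ ∑ k ∈ Finset.univ.filter (fun k => Bad k ω), W ω := by
      intro ω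
      obtain ⟨k, hk⟩ := h ω
      calc W ω = ∑ k' ∈ {k}, W ω := by simp
        _ ≤ ∑ k' ∈ Finset.univ.filter (fun k' => Bad k' ω), W ω := by
            apply Finset.sum_le_sum_of_subset_of_nonneg
            · intro x hx; simp at hx; subst hx; simp [hk]
            · intro _ _ _; exact hW ω
    calc ∑ ω, W ω ≤ ∑ ω, ∑ k ∈ Finset.univ.filter (fun k => Bad k ω), W ω :=
          Finset.sum_le_sum fun ω _ => h1 ω
      _ = ∑ ω : Ω, ∑ k : κ, if Bad k ω then W ω else 0 := by
          refine Finset.sum_congr rfl fun ω _ => ?_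
          rw [Finset.sum_filter]
      _ = ∑ k : κ, ∑ ω : Ω, if Bad k ω then W ω else 0 := Finset.sum_comm
      _ = ∑ k, ∑ ω ∈ Finset.univ.filter (Bad k), W ω := by
          refine Finset.sum_congr rfl fun k _ => ?_
          rw [Finset.sum_filter]
  linarith

lemma eventually_bound {Q β : ℝ} (hQ0 : 0 ≤ Q) (hQ1 : Q < 1) (hβ0 : 0 < β) :
    ∃ n₀ : ℕ, ∀ n : ℕ, n₀ ≤ n → (2 * (n:ℝ) + 2) * Q ^ (Nat.ceil (β * n)) < 1 := by
  have hF : Filter.Tendsto (fun m : ℕ => (2 * (m:ℝ) / β + 2) * Q ^ m)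
      Filter.atTop (nhds 0) := by
    have h1 : Filter.Tendsto (fun m : ℕ => ((m:ℝ)) * Q ^ m) Filter.atTop (nhds 0) := by
      have := tendsto_pow_const_mul_const_pow_of_lt_one 1 hQ0 hQ1
      simpa using this
    have h2 : Filter.Tendsto (fun m : ℕ => Q ^ m) Filter.atTop (nhds 0) :=
      tendsto_pow_atTop_nhds_zero_of_lt_one hQ0 hQ1
    have h3 := (h1.const_mul (2 / β)).add (h2.const_mul 2)
    simp only [mul_zero, add_zero] at h3
    convert h3 using 2 with m
    ring
  have hev : ∀ᶠ m : ℕ in Filter.atTop, (2 * (m:ℝ) / β + 2) * Q ^ m < 1 :=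
    hF.eventually (gt_mem_nhds (by norm_num))
  obtain ⟨M, hM⟩ := Filter.eventually_atTop.mp hev
  refine ⟨max 1 (Nat.ceil ((M:ℝ) / β)), fun n hn => ?_⟩
  set k : ℕ := Nat.ceil (β * n) with hk
  have hβn : (β * n : ℝ) ≤ k := Nat.le_ceil _
  have hMk : M ≤ k := by
    have h1 : ((M:ℝ) / β) ≤ n := by
      calc ((M:ℝ) / β) ≤ (Nat.ceil ((M:ℝ)/β) : ℝ) := Nat.le_ceil _
        _ ≤ n := by
          exact_mod_cast le_trans (le_max_right 1 _) hn
    have h2 : (M:ℝ) ≤ β * n := by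
      rw [div_le_iff₀ hβ0] at h1; linarith [h1]
    exact_mod_cast le_trans h2 hβn
  have hq : (0:ℝ) ≤ Q ^ k := pow_nonneg hQ0 k
  have hle : (2 * (n:ℝ) + 2) ≤ (2 * (k:ℝ) / β + 2) := by
    have h : (n:ℝ) ≤ (k:ℝ) / β := by
      rw [le_div_iff₀ hβ0, mul_comm]; exact hβn
    have h4 : 2*(k:ℝ)/β = 2*((k:ℝ)/β) := by ring
    linarith
  calc (2 * (n:ℝ) + 2) * Q ^ k ≤ (2 * (k:ℝ) / β + 2) * Q ^ k :=
        mul_le_mul_of_nonneg_right hle hq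
    _ < 1 := hM k hMk

end Stmt15Aux

set_option maxHeartbeats 2000000 in
/-- The Reservoir Lemma: if `δ(G) ≥ (c+μ)n` and every vertex has at least `ηn`
pairwise vertex-disjoint absorbers, then there is a reservoir `A` with
`2rζn ≤ |A| ≤ γn` such that every vertex has at least `(c + μ/2)|A|` neighbours in `A`
and at least `ζn` pairwise vertex-disjoint absorbers inside `A`. -/
theorem stmt15 (r : ℕ) (hr : 1 ≤ r) (c μ η γ : ℝ)
    (hc : 0 < c) (hμ : 0 < μ) (hη : 0 < η) (hγ : 0 < γ) (hcμ : c + μ ≤ 1) :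
    ∃ ζ : ℝ, 0 < ζ ∧ ∃ n₀ : ℕ, ∀ n : ℕ, n₀ ≤ n → ∀ G : SimpleGraph (Fin n),
      (∀ v : Fin n, (c + μ) * n ≤ ((G.neighborSet v).ncard : ℝ)) →
      (∀ v : Fin n, ∃ L : Finset (Fin (2 * r) → Fin n),
        η * n ≤ (L.card : ℝ) ∧ (∀ p ∈ L, IsAbsorber r G v p) ∧
        (L : Set (Fin (2 * r) → Fin n)).Pairwise fun p q =>
          Disjoint (Set.range p) (Set.range q)) →
      ∃ A : Finset (Fin n),
        2 * r * ζ * n ≤ (A.card : ℝ) ∧ (A.card : ℝ) ≤ γ * n ∧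
        ∀ v : Fin n,
          ((c + μ / 2) * A.card ≤ ((G.neighborSet v ∩ ↑A).ncard : ℝ)) ∧
          ∃ L : Finset (Fin (2 * r) → Fin n),
            ζ * n ≤ (L.card : ℝ) ∧
            (∀ p ∈ L, IsAbsorber r G v p ∧ ∀ i, p i ∈ A) ∧
            (L : Set (Fin (2 * r) → Fin n)).Pairwise fun p q =>
              Disjoint (Set.range p) (Set.range q) := by
  classical
  have hμ1 : μ < 1 := by linarith
  set δ : ℝ := μ / 4 with hδdef
  have hδ0 : 0 < δ := by positivity
  have hδ1 : δ < 1 := by rw [hδdef]; linarith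
  set p : ℝ := min (γ / 2) (1 / 2) with hpdef
  have hp0 : 0 < p := lt_min (by positivity) (by norm_num)
  have hphalf : p ≤ 1 / 2 := min_le_right _ _
  have hpγ : p ≤ γ / 2 := min_le_left _ _
  have hp1 : p ≤ 1 := by linarith
  set ρ : ℝ := p ^ (2 * r) with hρdef
  have hρ0 : 0 < ρ := pow_pos hp0 _
  have hρ1 : ρ ≤ 1 := pow_le_one₀ hp0.le hp1
  have h1δ : (0:ℝ) < 1 - δ := by linarith
  have hr0 : (0:ℝ) < 2 * r := by
    have : (1:ℝ) ≤ (r:ℝ) := by exact_mod_cast hr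
    linarith
  set ζ : ℝ := min ((1 - δ) * ρ * η) ((1 - δ) * p / (2 * r)) with hζdef
  have hζ0 : 0 < ζ := lt_min (by positivity) (by positivity)
  refine ⟨ζ, hζ0, ?_⟩
  set q1 : ℝ := Real.exp (δ * p ^ 1) * (1 - δ * p ^ 1) with hq1def
  set q2 : ℝ := Real.exp (δ * p ^ (2 * r)) * (1 - δ * p ^ (2 * r)) with hq2def
  set q3 : ℝ := Real.exp (-(Real.log (1 + δ) * ((1 + δ) * p ^ 1))) * (1 + δ * p ^ 1)
    with hq3def
  have hp1lt : δ * p ^ 1 < 1 := by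
    have : p ^ 1 ≤ 1 := by simpa using hp1
    nlinarith [pow_pos hp0 1]
  have hp2lt : δ * p ^ (2 * r) < 1 := by nlinarith [hρ0, hρ1]
  have hq1lt : q1 < 1 := Stmt15Aux.ql_lt_one hδ0 (pow_pos hp0 1) hp1lt
  have hq2lt : q2 < 1 := Stmt15Aux.ql_lt_one hδ0 hρ0 hp2lt
  have hq3lt : q3 < 1 := Stmt15Aux.qu_lt_one hδ0 (pow_pos hp0 1)
  have hq1nn : 0 ≤ q1 := mul_nonneg (Real.exp_pos _).le (by linarith)
  have hq2nn : 0 ≤ q2 := mul_nonneg (Real.exp_pos _).le (by linarith)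
  have hq3nn : 0 ≤ q3 := mul_nonneg (Real.exp_pos _).le
    (by nlinarith [pow_pos hp0 1])
  set Q : ℝ := max q1 (max q2 q3) with hQdef
  have hQ0 : 0 ≤ Q := le_trans hq1nn (le_max_left _ _)
  have hQ1 : Q < 1 := max_lt hq1lt (max_lt hq2lt hq3lt)
  set β : ℝ := min (c + μ) η with hβdef
  have hβ0 : 0 < β := lt_min (by linarith) hη
  obtain ⟨n₀, hn₀⟩ := Stmt15Aux.eventually_bound hQ0 hQ1 hβ0
  refine ⟨n₀, ?_⟩
  intro n hn G hdeg hLfam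
  choose Lv hLcard hLabs hLdisj using hLfam
  set T : Fin n → Finset (Fin n) := fun v => Finset.univ.filter (fun x => G.Adj v x)
    with hTdef
  have hTcard : ∀ v, (c + μ) * n ≤ ((T v).card : ℝ) := by
    intro v
    have hset : G.neighborSet v = ↑(T v) := by
      ext x; simp [hTdef, SimpleGraph.mem_neighborSet]
    have h := hdeg v
    rw [hset, Set.ncard_coe_finset] at h
    exact h
  -- absorber classifying maps
  have hidx : ∀ v : Fin n, ∃ idxA : Fin n → Option {q // q ∈ Lv v},
      ∀ (x : Fin n) (q : {q // q ∈ Lv v}), idxA x = some q ↔ x ∈ Set.range q.1 := by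
    intro v
    refine ⟨fun x => if h : ∃ q : {q // q ∈ Lv v}, x ∈ Set.range q.1
        then some h.choose else none, ?_⟩
    intro x q
    show (if h : ∃ q : {q // q ∈ Lv v}, x ∈ Set.range q.1
        then some h.choose else none) = some q ↔ x ∈ Set.range q.1
    constructor
    · intro he
      by_cases h : ∃ q : {q // q ∈ Lv v}, x ∈ Set.range q.1
      · rw [dif_pos h] at he
        have hspec := h.choose_spec
        have heq : h.choose = q := by injection he
        rw [← heq]; exact hspec
      · rw [dif_neg h] at he; exact absurd he (by simp)
    · intro hx
      have h : ∃ q : {q // q ∈ Lv v}, x ∈ Set.range q.1 := ⟨q, hx⟩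
      rw [dif_pos h]
      congr 1
      by_contra hne
      have hvne : (h.choose : {q // q ∈ Lv v}).1 ≠ q.1 := by
        intro hv; exact hne (Subtype.ext hv)
      have hdisj := hLdisj v (h.choose).2 q.2 hvne
      exact (Set.disjoint_left.mp hdisj h.choose_spec) hx
  choose idxA hidxA using hidx
  set Jv : ∀ v : Fin n, Finset (Option {q // q ∈ Lv v}) :=
    fun v => Finset.univ.image (some : {q // q ∈ Lv v} → Option {q // q ∈ Lv v}) with hJvdef
  have hJcard : ∀ v, (Jv v).card = (Lv v).card := by
    intro v
    rw [hJvdef]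
    rw [Finset.card_image_of_injective _ (Option.some_injective _), Finset.card_univ,
      Fintype.card_coe]
  have hsA : ∀ v, ∀ j ∈ Jv v, Fintype.card {x // idxA v x = j} = 2 * r := by
    intro v j hj
    rw [hJvdef] at hj
    simp only [Finset.mem_image, Finset.mem_univ, true_and] at hj
    obtain ⟨q, rfl⟩ := hj
    have h1 : Fintype.card {x // idxA v x = some q}
        = (Finset.univ.filter (fun x => idxA v x = some q)).card :=
      Fintype.card_subtype _
    rw [h1]
    have h2 : Finset.univ.filter (fun x => idxA v x = some q)
        = Finset.univ.image q.1 := by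
      ext x
      simp only [Finset.mem_filter, Finset.mem_univ, true_and, Finset.mem_image]
      rw [hidxA v x q]
      constructor
      · rintro ⟨i, hi⟩; exact ⟨i, hi⟩
      · rintro ⟨i, hi⟩; exact ⟨i, hi⟩
    rw [h2, Finset.card_image_of_injective _ (hLabs v q.1 q.2).1.1,
      Finset.card_univ, Fintype.card_fin]
  have hs1 : ∀ (J : Finset (Fin n)), ∀ j ∈ J,
      Fintype.card {x : Fin n // id x = j} = 1 := by
    intro J j _
    simpa using Fintype.card_subtype_eq j
  have hfcid : ∀ (J : Finset (Fin n)) (ω : Fin n → Bool),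
      Stmt15Aux.fullCount id J ω = (J.filter (fun j => ω j = true)).card := by
    intro J ω
    unfold Stmt15Aux.fullCount
    have h : ∀ j : Fin n, (∀ v : Fin n, id v = j → ω v = true) = (ω j = true) := by
      intro j
      exact propext ⟨fun h => h j rfl, fun h v hv => by rw [show v = j from hv]; exact h⟩
    simp only [h]
  set kc : ℕ := Nat.ceil (β * n) with hkcdef
  have hkcn : kc ≤ n := by
    rw [hkcdef]
    refine Nat.ceil_le.mpr ?_
    have hβ1 : β ≤ 1 := le_trans (min_le_left _ _) hcμ
    have hn0 : (0:ℝ) ≤ (n:ℝ) := Nat.cast_nonneg n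
    calc β * (n:ℝ) ≤ 1 * (n:ℝ) := mul_le_mul_of_nonneg_right hβ1 hn0
      _ = (n:ℝ) := one_mul _
  have hQpow : ∀ (q : ℝ) (m : ℕ), 0 ≤ q → q ≤ Q → kc ≤ m → q ^ m ≤ Q ^ kc := by
    intro q m hq hqQ hkm
    calc q ^ m ≤ Q ^ m := pow_le_pow_left₀ hq hqQ m
      _ ≤ Q ^ kc := pow_le_pow_of_le_one hQ0 hQ1.le hkm
  -- the four families of bad events
  have hbad1 : ∀ v : Fin n, ∑ ω ∈ Finset.univ.filter (fun ω : Fin n → Bool =>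
        (Stmt15Aux.fullCount id (T v) ω : ℝ) ≤ (1 - δ) * p ^ 1 * ((T v).card : ℝ)),
        Stmt15Aux.wt p ω ≤ Q ^ kc := by
    intro v
    refine le_trans (Stmt15Aux.tail_le_final p δ hp0 hp1 hδ0 hδ1 id (T v) 1 (hs1 (T v))) ?_
    refine hQpow q1 (T v).card hq1nn (le_max_left _ _) ?_
    refine Nat.ceil_le.mpr (le_trans ?_ (hTcard v))
    have hb : β ≤ c + μ := min_le_left _ _
    have hn0 : (0:ℝ) ≤ (n:ℝ) := Nat.cast_nonneg n
    calc β * (n:ℝ) ≤ (c + μ) * (n:ℝ) := mul_le_mul_of_nonneg_right hb hn0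
      _ ≤ _ := le_rfl
  have hbad2 : ∀ v : Fin n, ∑ ω ∈ Finset.univ.filter (fun ω : Fin n → Bool =>
        (Stmt15Aux.fullCount (idxA v) (Jv v) ω : ℝ)
          ≤ (1 - δ) * p ^ (2 * r) * ((Jv v).card : ℝ)),
        Stmt15Aux.wt p ω ≤ Q ^ kc := by
    intro v
    refine le_trans (Stmt15Aux.tail_le_final p δ hp0 hp1 hδ0 hδ1 (idxA v) (Jv v)
      (2 * r) (hsA v)) ?_
    refine hQpow q2 (Jv v).card hq2nn (le_trans (le_max_left _ _) (le_max_right _ _)) ?_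
    rw [hJcard v]
    refine Nat.ceil_le.mpr (le_trans ?_ (hLcard v))
    have hb : β ≤ η := min_le_right _ _
    have hn0 : (0:ℝ) ≤ (n:ℝ) := Nat.cast_nonneg n
    calc β * (n:ℝ) ≤ η * (n:ℝ) := mul_le_mul_of_nonneg_right hb hn0
      _ ≤ _ := le_rfl
  have hbad3 : ∑ ω ∈ Finset.univ.filter (fun ω : Fin n → Bool =>
        (Stmt15Aux.fullCount id (Finset.univ : Finset (Fin n)) ω : ℝ)
          ≤ (1 - δ) * p ^ 1 * ((Finset.univ : Finset (Fin n)).card : ℝ)),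
        Stmt15Aux.wt p ω ≤ Q ^ kc := by
    refine le_trans (Stmt15Aux.tail_le_final p δ hp0 hp1 hδ0 hδ1 id Finset.univ 1
      (hs1 Finset.univ)) ?_
    refine hQpow q1 _ hq1nn (le_max_left _ _) ?_
    rw [Finset.card_univ, Fintype.card_fin]
    exact hkcn
  have hbad4 : ∑ ω ∈ Finset.univ.filter (fun ω : Fin n → Bool =>
        (1 + δ) * p ^ 1 * ((Finset.univ : Finset (Fin n)).card : ℝ)
          ≤ (Stmt15Aux.fullCount id (Finset.univ : Finset (Fin n)) ω : ℝ)),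
        Stmt15Aux.wt p ω ≤ Q ^ kc := by
    refine le_trans (Stmt15Aux.tail_ge_final p δ hp0 hp1 hδ0 id Finset.univ 1
      (hs1 Finset.univ)) ?_
    refine hQpow q3 _ hq3nn (le_trans (le_max_right _ _) (le_max_right _ _)) ?_
    rw [Finset.card_univ, Fintype.card_fin]
    exact hkcn
  -- union bound and a good configuration
  obtain ⟨ω, hω⟩ := Stmt15Aux.exists_good (Stmt15Aux.wt p)
    (Stmt15Aux.wt_nonneg hp0.le hp1) (Stmt15Aux.wt_sum p)
    (fun k : (Fin n ⊕ Fin n) ⊕ Bool => fun ω : Fin n → Bool =>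
      match k with
      | Sum.inl (Sum.inl v) =>
          (Stmt15Aux.fullCount id (T v) ω : ℝ) ≤ (1 - δ) * p ^ 1 * ((T v).card : ℝ)
      | Sum.inl (Sum.inr v) =>
          (Stmt15Aux.fullCount (idxA v) (Jv v) ω : ℝ)
            ≤ (1 - δ) * p ^ (2 * r) * ((Jv v).card : ℝ)
      | Sum.inr true =>
          (1 + δ) * p ^ 1 * ((Finset.univ : Finset (Fin n)).card : ℝ)
            ≤ (Stmt15Aux.fullCount id (Finset.univ : Finset (Fin n)) ω : ℝ)
      | Sum.inr false =>
          (Stmt15Aux.fullCount id (Finset.univ : Finset (Fin n)) ω : ℝ)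
            ≤ (1 - δ) * p ^ 1 * ((Finset.univ : Finset (Fin n)).card : ℝ))
    (by
      calc ∑ k : (Fin n ⊕ Fin n) ⊕ Bool, ∑ ω ∈ Finset.univ.filter _, Stmt15Aux.wt p ω
          ≤ ∑ k : (Fin n ⊕ Fin n) ⊕ Bool, Q ^ kc := by
            refine Finset.sum_le_sum fun k _ => ?_
            match k with
            | Sum.inl (Sum.inl v) => exact hbad1 v
            | Sum.inl (Sum.inr v) => exact hbad2 v
            | Sum.inr true => exact hbad4
            | Sum.inr false => exact hbad3
        _ = ((2 * n + 2 : ℕ) : ℝ) * Q ^ kc := by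
            rw [Finset.sum_const, Finset.card_univ]
            have hcard : Fintype.card ((Fin n ⊕ Fin n) ⊕ Bool) = 2 * n + 2 := by
              simp only [Fintype.card_sum, Fintype.card_fin, Fintype.card_bool]
              omega
            rw [hcard, nsmul_eq_mul]
        _ < 1 := by
            have h := hn₀ n hn
            calc ((2 * n + 2 : ℕ) : ℝ) * Q ^ kc = (2 * (n:ℝ) + 2) * Q ^ (Nat.ceil (β * n)) := by
                  rw [← hkcdef]; push_cast; ring
              _ < 1 := h)
  -- consequences of goodness
  have hn0 : (0:ℝ) ≤ (n:ℝ) := Nat.cast_nonneg n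
  have hucard : (((Finset.univ : Finset (Fin n)).card : ℕ) : ℝ) = (n:ℝ) := by
    rw [Finset.card_univ, Fintype.card_fin]
  have hωdeg : ∀ v : Fin n, (1 - δ) * p ^ 1 * ((T v).card : ℝ)
      < (Stmt15Aux.fullCount id (T v) ω : ℝ) :=
    fun v => lt_of_not_ge (hω (Sum.inl (Sum.inl v)))
  have hωabs : ∀ v : Fin n, (1 - δ) * p ^ (2 * r) * ((Jv v).card : ℝ)
      < (Stmt15Aux.fullCount (idxA v) (Jv v) ω : ℝ) :=
    fun v => lt_of_not_ge (hω (Sum.inl (Sum.inr v)))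
  have hωup : (Stmt15Aux.fullCount id (Finset.univ : Finset (Fin n)) ω : ℝ)
      < (1 + δ) * p ^ 1 * ((Finset.univ : Finset (Fin n)).card : ℝ) :=
    lt_of_not_ge (hω (Sum.inr true))
  have hωlo : (1 - δ) * p ^ 1 * ((Finset.univ : Finset (Fin n)).card : ℝ)
      < (Stmt15Aux.fullCount id (Finset.univ : Finset (Fin n)) ω : ℝ) :=
    lt_of_not_ge (hω (Sum.inr false))
  set A : Finset (Fin n) := Finset.univ.filter (fun x => ω x = true) with hAdef
  have hAcount : Stmt15Aux.fullCount id (Finset.univ : Finset (Fin n)) ω = A.card := by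
    rw [hfcid]
  have hup : (A.card : ℝ) < (1 + δ) * p * (n:ℝ) := by
    have h := hωup
    rw [hAcount, hucard, pow_one] at h
    exact h
  have hlo : (1 - δ) * p * (n:ℝ) < (A.card : ℝ) := by
    have h := hωlo
    rw [hAcount, hucard, pow_one] at h
    exact h
  refine ⟨A, ?_, ?_, ?_⟩
  · -- lower bound on |A|
    have hζle : ζ ≤ (1 - δ) * p / (2 * r) := min_le_right _ _
    have h2 : 2 * (r:ℝ) * ζ ≤ (1 - δ) * p := by
      have := (le_div_iff₀ hr0).mp hζle
      linarith [this]
    calc 2 * (r:ℝ) * ζ * n ≤ (1 - δ) * p * n := mul_le_mul_of_nonneg_right h2 hn0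
      _ ≤ (A.card : ℝ) := hlo.le
  · -- upper bound on |A|
    have hδle : (1:ℝ) + δ ≤ 2 := by linarith
    have h3 : (1 + δ) * p ≤ γ := by
      calc (1 + δ) * p ≤ 2 * p := mul_le_mul_of_nonneg_right hδle hp0.le
        _ ≤ 2 * (γ / 2) := by linarith [hpγ]
        _ = γ := by ring
    calc (A.card : ℝ) ≤ (1 + δ) * p * n := hup.le
      _ ≤ γ * n := mul_le_mul_of_nonneg_right h3 hn0
  · intro v
    constructor
    · -- degree condition
      have hset : (G.neighborSet v ∩ ↑A) = ↑((T v).filter (fun x => ω x = true)) := by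
        ext x
        simp only [Set.mem_inter_iff, SimpleGraph.mem_neighborSet, Finset.coe_filter,
          Set.mem_setOf_eq, Finset.mem_coe, hAdef, Finset.mem_filter, Finset.mem_univ,
          true_and, hTdef]
      rw [hset, Set.ncard_coe_finset]
      have h1 : (0:ℝ) ≤ c + μ / 2 := by linarith
      have key : (c + μ / 2) * (1 + δ) ≤ (c + μ) * (1 - δ) := by
        rw [hδdef]; nlinarith
      have hpn : (0:ℝ) ≤ p * n := by positivity
      have h1δp : (0:ℝ) ≤ (1 - δ) * p := by positivity
      have hdegv := hωdeg v
      rw [pow_one, hfcid (T v) ω] at hdegv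
      calc (c + μ / 2) * (A.card : ℝ)
          ≤ (c + μ / 2) * ((1 + δ) * p * n) := mul_le_mul_of_nonneg_left hup.le h1
        _ = ((c + μ / 2) * (1 + δ)) * (p * n) := by ring
        _ ≤ ((c + μ) * (1 - δ)) * (p * n) := mul_le_mul_of_nonneg_right key hpn
        _ = (1 - δ) * p * ((c + μ) * n) := by ring
        _ ≤ (1 - δ) * p * ((T v).card : ℝ) := mul_le_mul_of_nonneg_left (hTcard v) h1δp
        _ ≤ (((T v).filter (fun x => ω x = true)).card : ℝ) := hdegv.le
    · -- absorbers inside A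
      refine ⟨(Lv v).filter (fun q => ∀ i, ω (q i) = true), ?_, ?_, ?_⟩
      · -- cardinality
        have hcnt : ((Lv v).filter (fun q => ∀ i, ω (q i) = true)).card
            = Stmt15Aux.fullCount (idxA v) (Jv v) ω := by
          unfold Stmt15Aux.fullCount
          refine Finset.card_bij
            (fun q hq => some (⟨q, Finset.mem_of_mem_filter q hq⟩ : {q // q ∈ Lv v}))
            ?_ ?_ ?_
          · intro q hq
            have hq1 : q ∈ Lv v := Finset.mem_of_mem_filter q hq
            have hq2 := (Finset.mem_filter.mp hq).2
            simp only [Finset.mem_filter]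
            constructor
            · rw [hJvdef]
              exact Finset.mem_image_of_mem _ (Finset.mem_univ _)
            · intro x hx
              obtain ⟨i, rfl⟩ := (hidxA v x ⟨q, hq1⟩).mp hx
              exact hq2 i
          · intro a _ b _ hab
            simpa using hab
          · intro j hj
            simp only [Finset.mem_filter] at hj
            obtain ⟨hjJ, hjfull⟩ := hj
            rw [hJvdef] at hjJ
            simp only [Finset.mem_image, Finset.mem_univ, true_and] at hjJ
            obtain ⟨q, rfl⟩ := hjJ
            refine ⟨q.1, ?_, ?_⟩
            · simp only [Finset.mem_filter]
              refine ⟨q.2, fun i => ?_⟩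
              exact hjfull (q.1 i) ((hidxA v (q.1 i) q).mpr ⟨i, rfl⟩)
            · exact congrArg some (Subtype.ext rfl)
        have habs := hωabs v
        rw [hJcard v, ← hcnt] at habs
        have hζle : ζ ≤ (1 - δ) * ρ * η := min_le_left _ _
        have h0 : (0:ℝ) ≤ (1 - δ) * ρ := by positivity
        calc ζ * (n:ℝ) ≤ ((1 - δ) * ρ * η) * n := mul_le_mul_of_nonneg_right hζle hn0
          _ = (1 - δ) * ρ * (η * n) := by ring
          _ ≤ (1 - δ) * ρ * ((Lv v).card : ℝ) := mul_le_mul_of_nonneg_left (hLcard v) h0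
          _ = (1 - δ) * p ^ (2 * r) * ((Lv v).card : ℝ) := by rw [hρdef]
          _ ≤ _ := habs.le
      · intro q hq
        rw [Finset.mem_filter] at hq
        refine ⟨hLabs v q hq.1, fun i => ?_⟩
        rw [hAdef, Finset.mem_filter]
        exact ⟨Finset.mem_univ _, hq.2 i⟩
      · refine Set.Pairwise.mono ?_ (hLdisj v)
        exact_mod_cast Finset.coe_subset.mpr (Finset.filter_subset _ _)
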